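/- (Proposition 3.3) Let α, α^1, α^2, … : ℕ → A be sequences and set x = p_p(α), x_n = p_p(α^n). Suppose that for every q ∈ ℕ the sequence α is not constant after the index q (i.e. there exist s, t ≥ q with α(s) ≠ α(t)). If lim_{n→∞} ‖x_n − x‖_p = 0 in l^p(A), then α^n → α in the Baire space N(A), i.e. for every k ∈ ℕ there exists N such that for all n ≥ N and all j ≤ k, α^n(j) = α(j). -/

import Mathlib

open scoped ENNReal
open Filter Topology

/-- For a sequence `α : ℕ → A`, the function `p_p(α) : A' → ℝ` (where `A' = A \ {z}`)
given by `p_p(α)(b) = ∑_{k ∈ ℕ, α k = b} 2^{-(k+1)}`. -/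
noncomputable def pFun {A : Type*} (z : A) (α : ℕ → A) (b : {b : A // b ≠ z}) : ℝ :=
  ∑' k : {k : ℕ | α k = (b : A)}, (2 : ℝ)⁻¹ ^ ((k : ℕ) + 1)

lemma summable_base : Summable (fun k : ℕ => (2 : ℝ)⁻¹ ^ (k + 1)) := by
  apply Summable.comp_injective (summable_geometric_of_lt_one (by norm_num) (by norm_num))
    (add_left_injective 1)

lemma tsum_base : ∑' k : ℕ, (2 : ℝ)⁻¹ ^ (k + 1) = 1 := by
  have h : ∀ k : ℕ, (2 : ℝ)⁻¹ ^ (k + 1) = 2⁻¹ * 2⁻¹ ^ k := fun k => by ring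
  rw [tsum_congr h, tsum_mul_left, tsum_geometric_of_lt_one (by norm_num) (by norm_num)]
  norm_num

lemma pFun_nonneg {A : Type*} (z : A) (α : ℕ → A) (b : {b : A // b ≠ z}) :
    0 ≤ pFun z α b :=
  tsum_nonneg fun k => by positivity

lemma pFun_eq_indicator {A : Type*} (z : A) (α : ℕ → A) (b : {b : A // b ≠ z}) :
    pFun z α b =
      ∑' k : ℕ, Set.indicator {k : ℕ | α k = (b : A)} (fun k => (2 : ℝ)⁻¹ ^ (k + 1)) k := by
  unfold pFun
  exact tsum_subtype {k : ℕ | α k = (b : A)} (fun k => (2 : ℝ)⁻¹ ^ (k + 1))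

lemma summable_pFun {A : Type*} (z : A) (α : ℕ → A) : Summable (pFun z α) := by
  classical
  apply summable_of_sum_le (c := 1) (pFun_nonneg z α)
  intro s
  have hind : ∀ b : {b : A // b ≠ z},
      Summable (Set.indicator {k : ℕ | α k = (b : A)} (fun k => (2 : ℝ)⁻¹ ^ (k + 1))) :=
    fun b => summable_base.indicator _
  have h1 : ∑ b ∈ s, pFun z α b
      = ∑' k : ℕ, ∑ b ∈ s, Set.indicator {k : ℕ | α k = (b : A)}
          (fun k => (2 : ℝ)⁻¹ ^ (k + 1)) k := by
    rw [Finset.sum_congr rfl fun b _ => pFun_eq_indicator z α b]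
    exact (Summable.tsum_finsetSum fun b _ => hind b).symm
  have hle : ∀ k : ℕ, ∑ b ∈ s, Set.indicator {k : ℕ | α k = (b : A)}
      (fun k => (2 : ℝ)⁻¹ ^ (k + 1)) k ≤ (2 : ℝ)⁻¹ ^ (k + 1) := by
    intro k
    by_cases hz : α k = z
    · have : ∀ b ∈ s, Set.indicator {k : ℕ | α k = (b : A)}
          (fun k => (2 : ℝ)⁻¹ ^ (k + 1)) k = 0 := by
        intro b _
        apply Set.indicator_of_notMem
        simp only [Set.mem_setOf_eq, hz]
        exact fun h => b.2 h.symm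
      rw [Finset.sum_congr rfl this, Finset.sum_const, smul_zero]
      positivity
    · have hb : ∀ b ∈ s, Set.indicator {k : ℕ | α k = (b : A)}
          (fun k => (2 : ℝ)⁻¹ ^ (k + 1)) k
          = if b = (⟨α k, hz⟩ : {b : A // b ≠ z}) then (2 : ℝ)⁻¹ ^ (k + 1) else 0 := by
        intro b _
        rw [Set.indicator_apply]
        congr 1
        simp only [Set.mem_setOf_eq, eq_comm (a := α k)]
        rw [Subtype.ext_iff]
      rw [Finset.sum_congr rfl hb, Finset.sum_ite_eq' s _ (fun _ => (2 : ℝ)⁻¹ ^ (k + 1))]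
      split_ifs
      · exact le_rfl
      · positivity
  have hnn : ∀ k : ℕ, 0 ≤ ∑ b ∈ s, Set.indicator {k : ℕ | α k = (b : A)}
      (fun k => (2 : ℝ)⁻¹ ^ (k + 1)) k := by
    intro k
    apply Finset.sum_nonneg
    intro b _
    exact Set.indicator_nonneg (fun k _ => by positivity) k
  rw [h1, ← tsum_base]
  exact Summable.tsum_le_tsum hle (Summable.of_nonneg_of_le hnn hle summable_base) summable_base

lemma pFun_memℓp {A : Type*} (z : A) (α : ℕ → A) {P : ℝ≥0∞} (hP : 1 ≤ P) :
    Memℓp (pFun z α) P := by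
  apply Memℓp.of_exponent_ge (q := 1) _ hP
  apply memℓp_gen
  simp only [ENNReal.toReal_one, Real.rpow_one]
  apply Summable.congr (summable_pFun z α)
  intro b
  rw [Real.norm_of_nonneg (pFun_nonneg z α b)]

/-- The map `p_p : N(A) → l^p(A)`, sending `α` to the element of `l^p(A)` with
coordinates `p_p(α)(b) = ∑_{k ∈ ℕ, α k = b} 2^{-(k+1)}`. -/
noncomputable def pp {A : Type*} (z : A) (α : ℕ → A) (P : ℝ≥0∞) [Fact (1 ≤ P)] :
    lp (fun _ : {b : A // b ≠ z} => ℝ) P :=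
  ⟨pFun z α, pFun_memℓp z α Fact.out⟩

/-- Proposition 3.3. If `α` is not constant after any rank and
`‖p_p(αⁿ) - p_p(α)‖ → 0` in `l^p(A)`, then `αⁿ → α` in the Baire space: for every `k`
there is `N` such that `αⁿ j = α j` for all `n ≥ N` and `j ≤ k`. -/


noncomputable def fg : ℕ → ℝ := fun m => (2 : ℝ)⁻¹ ^ (m + 1)

lemma fg_pos (m : ℕ) : 0 < fg m := by unfold fg; positivity

lemma summable_fg : Summable fg := by
  have : Summable (fun k : ℕ => (2 : ℝ)⁻¹ ^ (k + 1)) := by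
    apply Summable.comp_injective (summable_geometric_of_lt_one (by norm_num) (by norm_num))
      (add_left_injective 1)
  exact this

lemma tsum_fg_add (N : ℕ) : ∑' m : ℕ, fg (m + N) = (2 : ℝ)⁻¹ ^ N := by
  have h : ∀ m : ℕ, fg (m + N) = (2 : ℝ)⁻¹ ^ N * (2 : ℝ)⁻¹ ^ (m + 1) := by
    intro m; unfold fg; rw [← pow_add]; ring_nf
  rw [tsum_congr h, tsum_mul_left]
  have h2 : ∀ k : ℕ, (2 : ℝ)⁻¹ ^ (k + 1) = 2⁻¹ * 2⁻¹ ^ k := fun k => by ring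
  rw [tsum_congr h2, tsum_mul_left, tsum_geometric_of_lt_one (by norm_num) (by norm_num)]
  norm_num

noncomputable def msum (S : Set ℕ) : ℝ := ∑' m, S.indicator fg m

lemma summable_ind (S : Set ℕ) : Summable (S.indicator fg) := summable_fg.indicator S

lemma msum_nonneg (S : Set ℕ) : 0 ≤ msum S :=
  tsum_nonneg fun m => Set.indicator_nonneg (fun k _ => (fg_pos k).le) m

lemma msum_mono {S T : Set ℕ} (h : S ⊆ T) : msum S ≤ msum T :=
  Summable.tsum_le_tsum (Set.indicator_le_indicator_of_subset h (fun k => (fg_pos k).le))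
    (summable_ind S) (summable_ind T)

lemma msum_union {S T : Set ℕ} (h : Disjoint S T) : msum (S ∪ T) = msum S + msum T := by
  unfold msum
  rw [← Summable.tsum_add (summable_ind S) (summable_ind T)]
  exact tsum_congr fun m => by rw [Set.indicator_union_of_disjoint h]

lemma msum_empty : msum ∅ = 0 := by
  unfold msum; simp

lemma msum_singleton (m0 : ℕ) : msum {m0} = fg m0 := by
  unfold msum
  rw [tsum_eq_single m0 (fun b hb => Set.indicator_of_notMem (by simpa using hb) _)]
  exact Set.indicator_of_mem rfl _

lemma msum_Ici (N : ℕ) : msum (Set.Ici N) = (2 : ℝ)⁻¹ ^ N := by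
  unfold msum
  rw [← Summable.sum_add_tsum_nat_add N (summable_ind (Set.Ici N))]
  have h1 : ∑ i ∈ Finset.range N, (Set.Ici N).indicator fg i = 0 := by
    apply Finset.sum_eq_zero
    intro i hi
    exact Set.indicator_of_notMem (by simp [Finset.mem_range] at hi ⊢; omega) _
  have h2 : ∀ i : ℕ, (Set.Ici N).indicator fg (i + N) = fg (i + N) := fun i =>
    Set.indicator_of_mem (by simp) _
  rw [h1, tsum_congr h2, tsum_fg_add, zero_add]

lemma le_msum {S : Set ℕ} {m0 : ℕ} (h : m0 ∈ S) : fg m0 ≤ msum S :=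
  (msum_singleton m0) ▸ msum_mono (Set.singleton_subset_iff.mpr h)

lemma msum_le {S : Set ℕ} {N : ℕ} (h : S ⊆ Set.Ici N) : msum S ≤ (2 : ℝ)⁻¹ ^ N :=
  (msum_Ici N) ▸ msum_mono h

lemma msum_le_missing {S : Set ℕ} {N m0 : ℕ} (h : S ⊆ Set.Ici N) (hm : N ≤ m0)
    (hmS : m0 ∉ S) : msum S ≤ (2 : ℝ)⁻¹ ^ N - fg m0 := by
  have h1 : msum S ≤ msum (Set.Ici N \ {m0}) :=
    msum_mono fun x hx => ⟨h hx, by simp; rintro rfl; exact hmS hx⟩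
  have h2 : msum (Set.Ici N \ {m0}) + fg m0 = (2 : ℝ)⁻¹ ^ N := by
    rw [← msum_singleton m0, ← msum_union (by simp), Set.diff_union_of_subset (by simpa using hm),
      msum_Ici]
  linarith

lemma pFun_eq_msum {A : Type*} (z : A) (γ : ℕ → A) (b : {b : A // b ≠ z}) :
    pFun z γ b = msum {m | γ m = (b : A)} := by
  rw [pFun_eq_indicator]; rfl

open Classical in
lemma pFun_decomp {A : Type*} (z : A) (γ : ℕ → A) (b : {b : A // b ≠ z}) (j : ℕ) :
    pFun z γ b = msum ({m | γ m = (b : A)} ∩ Set.Iio j)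
      + (if γ j = (b : A) then fg j else 0)
      + msum ({m | γ m = (b : A)} ∩ Set.Ioi j) := by
  rw [pFun_eq_msum]
  set E := {m | γ m = (b : A)} with hE
  have hsplit : E = (E ∩ Set.Iio j) ∪ ((E ∩ {j}) ∪ (E ∩ Set.Ioi j)) := by
    ext m
    simp only [Set.mem_union, Set.mem_inter_iff, Set.mem_Iio, Set.mem_Ioi,
      Set.mem_singleton_iff]
    constructor
    · intro h
      rcases lt_trichotomy m j with h' | h' | h'
      · exact Or.inl ⟨h, h'⟩
      · exact Or.inr (Or.inl ⟨h, h'⟩)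
      · exact Or.inr (Or.inr ⟨h, h'⟩)
    · rintro (⟨h, _⟩ | ⟨h, _⟩ | ⟨h, _⟩) <;> exact h
  have hd1 : Disjoint (E ∩ {j}) (E ∩ Set.Ioi j) := by
    rw [Set.disjoint_left]
    rintro m ⟨_, hm1⟩ ⟨_, hm2⟩
    simp only [Set.mem_singleton_iff] at hm1
    simp only [Set.mem_Ioi] at hm2
    omega
  have hd2 : Disjoint (E ∩ Set.Iio j) ((E ∩ {j}) ∪ (E ∩ Set.Ioi j)) := by
    rw [Set.disjoint_left]
    rintro m ⟨_, hm1⟩ (⟨_, hm2⟩ | ⟨_, hm2⟩) <;>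
      simp only [Set.mem_Iio] at hm1 <;>
      first
        | (simp only [Set.mem_singleton_iff] at hm2; omega)
        | (simp only [Set.mem_Ioi] at hm2; omega)
  have hmid : msum (E ∩ {j}) = if γ j = (b : A) then fg j else 0 := by
    by_cases h : γ j = (b : A)
    · have hsub : E ∩ {j} = {j} := by
        apply Set.inter_eq_self_of_subset_right
        intro m hm
        rw [Set.mem_singleton_iff] at hm
        subst hm
        exact h
      rw [if_pos h, hsub, msum_singleton]
    · rw [if_neg h]
      have : E ∩ {j} = ∅ := by
        ext m; simp only [Set.mem_inter_iff, Set.mem_singleton_iff, Set.mem_empty_iff_false,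
          iff_false, not_and]
        rintro hm rfl; exact h hm
      rw [this, msum_empty]
  conv_lhs => rw [hsplit]
  rw [msum_union hd2, msum_union hd1, hmid]
  ring

open Classical in
lemma sep_lemma {A : Type*} (z : A) (α β : ℕ → A) (j s t M : ℕ)
    (hpre : ∀ m < j, β m = α m) (hj : β j ≠ α j)
    (hjs : j < s) (hjt : j < t) (hsM : s < M) (htM : t < M) (hst : α s ≠ α t) :
    ∃ b : {b : A // b ≠ z}, (2 : ℝ)⁻¹ ^ (M + 2) ≤ |pFun z β b - pFun z α b| := by
  set ε : ℝ := (2 : ℝ)⁻¹ ^ (M + 2) with hεdef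
  have hεpos : 0 < ε := by rw [hεdef]; positivity
  set T : (ℕ → A) → A → ℝ := fun γ c => msum ({m | γ m = c} ∩ Set.Ioi j) with hT
  have hdiff : ∀ b : {b : A // b ≠ z}, pFun z β b - pFun z α b =
      ((if β j = (b : A) then fg j else 0) - (if α j = (b : A) then fg j else 0))
      + (T β (b : A) - T α (b : A)) := by
    intro b
    rw [pFun_decomp z β b j, pFun_decomp z α b j]
    have heq : {m | β m = (b : A)} ∩ Set.Iio j = {m | α m = (b : A)} ∩ Set.Iio j := by
      ext m
      simp only [Set.mem_inter_iff, Set.mem_setOf_eq, Set.mem_Iio]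
      constructor
      · rintro ⟨h1, h2⟩; exact ⟨(hpre m h2) ▸ h1, h2⟩
      · rintro ⟨h1, h2⟩; exact ⟨(hpre m h2).symm ▸ h1, h2⟩
    rw [heq, hT]
    ring
  have T_nonneg : ∀ γ c, 0 ≤ T γ c := fun γ c => msum_nonneg _
  have T_le : ∀ (γ : ℕ → A) c, T γ c ≤ fg j := by
    intro γ c
    have := msum_le (S := {m | γ m = c} ∩ Set.Ioi j) (N := j + 1)
      (fun m hm => by simpa using hm.2)
    exact this
  have T_single : ∀ (γ : ℕ → A) c m0, j < m0 → γ m0 = c → fg m0 ≤ T γ c := by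
    intro γ c m0 h1 h2
    exact le_msum ⟨h2, h1⟩
  have T_missing : ∀ (γ : ℕ → A) c m0, j < m0 → γ m0 ≠ c → T γ c ≤ fg j - fg m0 := by
    intro γ c m0 h1 h2
    have := msum_le_missing (S := {m | γ m = c} ∩ Set.Ioi j) (N := j + 1) (m0 := m0)
      (fun m hm => by simpa using hm.2) h1 (fun hm => h2 hm.1)
    exact this
  have T_tail : ∀ (γ : ℕ → A) c, (∀ m, j < m → m ≤ M → γ m ≠ c) →
      T γ c ≤ (2 : ℝ)⁻¹ ^ (M + 1) := by
    intro γ c h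
    apply msum_le
    rintro m ⟨hm1, hm2⟩
    simp only [Set.mem_Ioi] at hm2
    simp only [Set.mem_Ici]
    by_contra hc
    exact h m hm2 (by omega) hm1
  have hε2 : (2 : ℝ)⁻¹ ^ (M + 1) = 2 * ε := by
    rw [hεdef, show M + 2 = (M + 1) + 1 from rfl, pow_succ]
    ring
  have hε1 : (2 : ℝ)⁻¹ ^ M = 4 * ε := by
    rw [hεdef, show M + 2 = M + 1 + 1 from rfl, pow_succ, pow_succ]
    ring
  have hfg_lt : ∀ m ≤ M, ε < fg m := by
    intro m hm
    have h1 : (2 : ℝ)⁻¹ ^ (M + 1) ≤ fg m := by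
      unfold fg
      exact pow_le_pow_of_le_one (by norm_num) (by norm_num) (by omega)
    linarith
  have hfg_M : ∀ m < M, (2 : ℝ)⁻¹ ^ M ≤ fg m := by
    intro m hm
    unfold fg
    exact pow_le_pow_of_le_one (by norm_num) (by norm_num) (by omega)
  by_cases hαj : α j = z
  · have hβz : β j ≠ z := fun h => hj (h.trans hαj.symm)
    refine ⟨⟨β j, hβz⟩, ?_⟩
    have hΔ := hdiff ⟨β j, hβz⟩
    rw [if_pos rfl, if_neg (fun h : α j = β j => hj h.symm)] at hΔ
    obtain ⟨u, hju, huM, hu⟩ : ∃ u, j < u ∧ u < M ∧ α u ≠ β j := by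
      by_cases h : α s = β j
      · exact ⟨t, hjt, htM, fun ht0 => hst (h.trans ht0.symm)⟩
      · exact ⟨s, hjs, hsM, h⟩
    have h1 := T_missing α (β j) u hju hu
    have h2 := T_nonneg β (β j)
    have h3 := hfg_M u huM
    calc ε ≤ fg u := by linarith
    _ ≤ pFun z β ⟨β j, hβz⟩ - pFun z α ⟨β j, hβz⟩ := by rw [hΔ]; linarith
    _ ≤ |pFun z β ⟨β j, hβz⟩ - pFun z α ⟨β j, hβz⟩| := le_abs_self _
  · set b1 : {b : A // b ≠ z} := ⟨α j, hαj⟩ with hb1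
    by_cases hsmall : ε ≤ |pFun z β b1 - pFun z α b1|
    · exact ⟨b1, hsmall⟩
    push_neg at hsmall
    have hΔ1 := hdiff b1
    rw [if_neg (show β j ≠ (b1 : A) from hj), if_pos rfl] at hΔ1
    rw [hΔ1] at hsmall
    obtain ⟨hlo, hhi⟩ := abs_lt.mp hsmall
    have hTβ_ge : fg j - ε < T β (α j) := by
      have := T_nonneg α (α j); linarith
    have hTα_lt : T α (α j) < ε := by
      have := T_le β (α j); linarith
    have hβmid : ∀ m, j < m → m ≤ M → β m = α j := by
      intro m h1 h2
      by_contra hne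
      have h3 := T_missing β (α j) m h1 hne
      have h4 := hfg_lt m h2
      linarith
    have hαmid : ∀ m, j < m → m ≤ M → α m ≠ α j := by
      intro m h1 h2 heq
      have h3 := T_single α (α j) m h1 heq
      have h4 := hfg_lt m h2
      linarith
    obtain ⟨u, v, hju, huM, hjv, hvM, huz, hvu⟩ :
        ∃ u v, j < u ∧ u < M ∧ j < v ∧ v < M ∧ α u ≠ z ∧ α v ≠ α u := by
      by_cases h : α s = z
      · exact ⟨t, s, hjt, htM, hjs, hsM, fun ht0 => hst (h.trans ht0.symm), hst⟩
      · exact ⟨s, t, hjs, hsM, hjt, htM, h, hst.symm⟩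
    have hub1 : α u ≠ α j := hαmid u hju huM.le
    refine ⟨⟨α u, huz⟩, ?_⟩
    have hΔ0 := hdiff ⟨α u, huz⟩
    rw [if_neg (show α j ≠ α u from fun h => hub1 h.symm)] at hΔ0
    by_cases hβj : β j = α u
    · rw [if_pos hβj] at hΔ0
      have h1 := T_missing α (α u) v hjv hvu
      have h2 := T_nonneg β (α u)
      have h3 := hfg_M v hvM
      calc ε ≤ fg v := by linarith
      _ ≤ pFun z β ⟨α u, huz⟩ - pFun z α ⟨α u, huz⟩ := by rw [hΔ0]; linarith
      _ ≤ |pFun z β ⟨α u, huz⟩ - pFun z α ⟨α u, huz⟩| := le_abs_self _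
    · rw [if_neg hβj] at hΔ0
      have h1 := T_single α (α u) u hju rfl
      have h2 := T_tail β (α u) (fun m hm1 hm2 hc =>
        hub1 (hc.symm.trans (hβmid m hm1 hm2)))
      have h3 := hfg_M u huM
      calc ε ≤ pFun z α ⟨α u, huz⟩ - pFun z β ⟨α u, huz⟩ := by
            have h5 : pFun z β ⟨α u, huz⟩ - pFun z α ⟨α u, huz⟩
                = T β (α u) - T α (α u) := by rw [hΔ0]; ring
            have h6 : pFun z α ⟨α u, huz⟩ - pFun z β ⟨α u, huz⟩
                = T α (α u) - T β (α u) := by linarith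
            rw [h6]
            linarith
      _ ≤ |pFun z β ⟨α u, huz⟩ - pFun z α ⟨α u, huz⟩| := by
          rw [abs_sub_comm]; exact le_abs_self _

theorem baire_conv_of_norm_conv {A : Type*} [Infinite A] (z : A) (P : ℝ≥0∞)
    [Fact (1 ≤ P)] (hP : P ≠ ∞) (α : ℕ → A) (αs : ℕ → ℕ → A)
    (hnc : ∀ q : ℕ, ∃ s t : ℕ, q ≤ s ∧ q ≤ t ∧ α s ≠ α t)
    (hlim : Tendsto (fun n : ℕ => ‖pp z (αs n) P - pp z α P‖) atTop (𝓝 0)) :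
    ∀ k : ℕ, ∃ N : ℕ, ∀ n ≥ N, ∀ j ≤ k, αs n j = α j := by
  classical
  intro k
  obtain ⟨s, t, hks, hkt, hst⟩ := hnc (k + 1)
  set M : ℕ := max s t + 1 with hM
  have hεpos : (0 : ℝ) < (2 : ℝ)⁻¹ ^ (M + 2) := by positivity
  have hev : ∀ᶠ n in atTop, ‖pp z (αs n) P - pp z α P‖ < (2 : ℝ)⁻¹ ^ (M + 2) :=
    hlim.eventually_lt_const hεpos
  obtain ⟨N, hN⟩ := Filter.eventually_atTop.mp hev
  refine ⟨N, fun n hn j hj => ?_⟩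
  by_contra hne
  have hex : ∃ m, αs n m ≠ α m := ⟨j, hne⟩
  have hj0 : αs n (Nat.find hex) ≠ α (Nat.find hex) := Nat.find_spec hex
  have hj0le : Nat.find hex ≤ j := Nat.find_min' hex hne
  have hpre : ∀ m < Nat.find hex, αs n m = α m := fun m hm =>
    not_not.mp (Nat.find_min hex hm)
  obtain ⟨b, hb⟩ := sep_lemma z α (αs n) (Nat.find hex) s t M hpre hj0
    (by omega) (by omega) (by omega) (by omega) hst
  have hP0 : P ≠ 0 := by
    have h1 : (1 : ℝ≥0∞) ≤ P := Fact.out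
    intro h
    rw [h] at h1
    exact absurd h1 (by norm_num)
  have hcoord : |pFun z (αs n) b - pFun z α b| ≤ ‖pp z (αs n) P - pp z α P‖ := by
    have h2 := lp.norm_apply_le_norm hP0 (pp z (αs n) P - pp z α P) b
    rw [lp.coeFn_sub] at h2
    simp only [Pi.sub_apply, Real.norm_eq_abs] at h2
    exact h2
  have := hN n hn
  linarith
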